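/- Define H(θ, θ₀) = e^{(μ/σ²)θ} ( Ξ cosh(Ξ(k−θ)) + (μ/σ²) sinh(Ξ(k−θ)) ) − Ξ e^{(μ/σ²)k} ξ(θ₀). Then H(θ, θ₀) ≥ 0 for all 0 ≤ θ ≤ θ₀ < k, H is strictly decreasing in θ on [0,θ₀] and θ₀ ↦ H(θ₀,θ₀) is strictly decreasing, and the infimum of H over {0 ≤ θ ≤ θ₀ < k} equals 0, attained in the limit θ = θ₀ = k. -/

import Mathlib

open Real Set

noncomputable section

/-- `Ξ = sqrt(2r/σ² + μ²/σ⁴)`. -/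
def Xi (r μ σ : ℝ) : ℝ := Real.sqrt (2 * r / σ ^ 2 + μ ^ 2 / σ ^ 4)

/-- The closed-form expression for the Laplace transform
`ξ(y) = E[e^{-r τ_D(k)} | D_0 = y]` of the drawdown time of a Brownian motion
with drift `μ` and volatility `σ`. -/
def xiFormula (r μ σ k y : ℝ) : ℝ :=
  exp (μ / σ ^ 2 * (y - k)) * (sinh (Xi r μ σ * y) / sinh (Xi r μ σ * k)) +
    exp (μ / σ ^ 2 * y) * (sinh (Xi r μ σ * (k - y)) / sinh (Xi r μ σ * k)) *
      (exp (-(μ / σ ^ 2) * k) * Xi r μ σ /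
        (Xi r μ σ * cosh (Xi r μ σ * k) - μ / σ ^ 2 * sinh (Xi r μ σ * k)))

/-- `H(θ,θ₀) = e^{(μ/σ²)θ}(Ξ cosh(Ξ(k-θ)) + (μ/σ²) sinh(Ξ(k-θ))) - Ξ e^{(μ/σ²)k} ξ(θ₀)`. -/
def Hfun (r μ σ k θ θ₀ : ℝ) : ℝ :=
  exp (μ / σ ^ 2 * θ) *
      (Xi r μ σ * cosh (Xi r μ σ * (k - θ)) + μ / σ ^ 2 * sinh (Xi r μ σ * (k - θ))) -
    Xi r μ σ * exp (μ / σ ^ 2 * k) * xiFormula r μ σ k θ₀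

/-- auxiliary function `G(t) = e^{at}(X cosh(X(k-t)) + a sinh(X(k-t)))`. -/
def Gf (a X k t : ℝ) : ℝ := exp (a*t) * (X * cosh (X*(k-t)) + a * sinh (X*(k-t)))

/-- auxiliary function `φ(t) = e^{at} sinh(X(k-t))`. -/
def phif (a X k t : ℝ) : ℝ := exp (a*t) * sinh (X*(k-t))

lemma keyid (X a k y : ℝ) (hs : Real.sinh (X*k) ≠ 0)
    (hD : X * Real.cosh (X*k) - a * Real.sinh (X*k) ≠ 0) :
    X * exp (a*k) * (exp (a*(y-k)) * (sinh (X*y) / sinh (X*k)) +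
      exp (a*y) * (sinh (X*(k-y)) / sinh (X*k)) *
        (exp (-a*k) * X / (X * cosh (X*k) - a * sinh (X*k))))
    = Gf a X k y
      - (X^2 - a^2) * sinh (X*k) / (X * cosh (X*k) - a * sinh (X*k)) *
        phif a X k y := by
  unfold Gf phif
  have hsy : sinh (X*y) = sinh (X*k) * cosh (X*(k-y)) - cosh (X*k) * sinh (X*(k-y)) := by
    rw [show X*y = X*k - X*(k-y) by ring, Real.sinh_sub]
  have h1 : exp (a*(y-k)) = exp (a*y) / exp (a*k) := by
    rw [← Real.exp_sub]; ring_nf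
  have h2 : exp (-a*k) = 1 / exp (a*k) := by
    rw [show -a*k = -(a*k) by ring, Real.exp_neg]; ring
  rw [hsy, h1, h2]
  field_simp
  linear_combination (-(X^2 * sinh (X*(k-y)))) * Real.cosh_sq (X*k)

lemma hasDerivAt_Gf (a X k θ : ℝ) :
    HasDerivAt (Gf a X k) (exp (a*θ) * ((a^2 - X^2) * sinh (X*(k-θ)))) θ := by
  have hl : HasDerivAt (fun t : ℝ => a*t) a θ := by
    simpa using (hasDerivAt_id θ).const_mul a
  have he := hl.exp
  have hin : HasDerivAt (fun t : ℝ => X*(k-t)) (-X) θ := by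
    simpa using ((hasDerivAt_id θ).const_sub k).const_mul X
  have hc := hin.cosh
  have hsn := hin.sinh
  have h := he.mul ((hc.const_mul X).add (hsn.const_mul a))
  unfold Gf
  refine h.congr_deriv ?_
  simp only [Pi.add_apply]
  ring

lemma hasDerivAt_phif (a X k y : ℝ) :
    HasDerivAt (phif a X k)
      (exp (a*y) * (a * sinh (X*(k-y)) - X * cosh (X*(k-y)))) y := by
  have hl : HasDerivAt (fun t : ℝ => a*t) a y := by
    simpa using (hasDerivAt_id y).const_mul a
  have he := hl.exp
  have hin : HasDerivAt (fun t : ℝ => X*(k-t)) (-X) y := by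
    simpa using ((hasDerivAt_id y).const_sub k).const_mul X
  have hsn := hin.sinh
  have h := he.mul hsn
  unfold phif
  refine h.congr_deriv ?_
  ring

theorem Hfun_properties (σ μ r k : ℝ) (hσ : 0 < σ) (hr : 0 < r) (hk : 0 < k) :
    -- `H ≥ 0` on `{0 ≤ θ ≤ θ₀ < k}`
    (∀ θ θ₀ : ℝ, 0 ≤ θ → θ ≤ θ₀ → θ₀ < k → 0 ≤ Hfun r μ σ k θ θ₀) ∧
      -- `H` is strictly decreasing in `θ` on `[0, θ₀]`
      (∀ θ₀ ∈ Set.Ico (0 : ℝ) k,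
        StrictAntiOn (fun θ => Hfun r μ σ k θ θ₀) (Set.Icc 0 θ₀)) ∧
      -- `θ₀ ↦ H(θ₀, θ₀)` is strictly decreasing
      StrictAntiOn (fun θ₀ => Hfun r μ σ k θ₀ θ₀) (Set.Ico (0 : ℝ) k) ∧
      -- the infimum of `H` over `{0 ≤ θ ≤ θ₀ < k}` is `0`, attained in the limit `θ = θ₀ = k`
      IsGLB {v : ℝ | ∃ θ θ₀ : ℝ, 0 ≤ θ ∧ θ ≤ θ₀ ∧ θ₀ < k ∧ v = Hfun r μ σ k θ θ₀} 0 := by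
  have hσ2 : (0:ℝ) < σ^2 := by positivity
  set a := μ / σ ^ 2 with ha
  set X := Xi r μ σ with hXd
  have hXpos : 0 < X := by
    rw [hXd]; simp only [Xi]
    exact Real.sqrt_pos.mpr (by positivity)
  have hX2 : X ^ 2 = 2*r/σ^2 + a^2 := by
    rw [hXd, ha]; simp only [Xi]
    rw [Real.sq_sqrt (by positivity)]
    ring
  have haX : a^2 < X^2 := by
    rw [hX2]
    have : (0:ℝ) < 2*r/σ^2 := by positivity
    linarith
  have habs : |a| < X := by
    nlinarith [sq_abs a, abs_nonneg a]
  have hDpos : ∀ x : ℝ, 0 < X * cosh x - a * sinh x := by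
    intro x
    have h1 : a * sinh x ≤ |a| * cosh x := by
      calc a * sinh x ≤ |a * sinh x| := le_abs_self _
        _ = |a| * |sinh x| := abs_mul _ _
        _ ≤ |a| * cosh x := by
            apply mul_le_mul_of_nonneg_left _ (abs_nonneg a)
            nlinarith [Real.cosh_sq x, sq_abs (Real.sinh x), Real.cosh_pos x,
              abs_nonneg (Real.sinh x)]
    have h2 : |a| * cosh x < X * cosh x := mul_lt_mul_of_pos_right habs (Real.cosh_pos x)
    linarith
  have hs : 0 < sinh (X*k) := Real.sinh_pos_iff.mpr (by positivity)
  have hD : 0 < X * cosh (X*k) - a * sinh (X*k) := hDpos _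
  set K := (X^2 - a^2) * sinh (X*k) / (X * cosh (X*k) - a * sinh (X*k)) with hK
  have hKpos : 0 < K := div_pos (mul_pos (by linarith) hs) hD
  have hxi : ∀ y, X * exp (a*k) * xiFormula r μ σ k y
      = Gf a X k y - K * phif a X k y := by
    intro y
    simp only [xiFormula]
    rw [← hXd, ← ha, hK]
    exact keyid X a k y hs.ne' hD.ne'
  have hHeq : ∀ θ θ₀, Hfun r μ σ k θ θ₀
      = Gf a X k θ - Gf a X k θ₀ + K * phif a X k θ₀ := by
    intro θ θ₀
    simp only [Hfun]
    rw [← hXd, ← ha, hxi θ₀]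
    unfold Gf
    ring
  -- G strictly decreasing on [0, θ₀] for θ₀ < k
  have hGcont : Continuous (Gf a X k) := by unfold Gf; fun_prop
  have hGanti : ∀ θ₀, 0 ≤ θ₀ → θ₀ < k → StrictAntiOn (Gf a X k) (Icc 0 θ₀) := by
    intro θ₀ h0 h1
    apply strictAntiOn_of_deriv_neg (convex_Icc 0 θ₀) hGcont.continuousOn
    intro x hx
    rw [interior_Icc] at hx
    rw [(hasDerivAt_Gf a X k x).deriv]
    have hsh : 0 < sinh (X*(k-x)) :=
      Real.sinh_pos_iff.mpr (mul_pos hXpos (by linarith [hx.2]))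
    have hpos := mul_pos (Real.exp_pos (a*x))
      (mul_pos (by linarith : (0:ℝ) < X^2 - a^2) hsh)
    have hre : exp (a*x) * ((a^2 - X^2) * sinh (X*(k-x)))
        = -(exp (a*x) * ((X^2 - a^2) * sinh (X*(k-x)))) := by ring
    rw [hre]; linarith
  -- part 2
  have part2 : ∀ θ₀ ∈ Set.Ico (0:ℝ) k,
      StrictAntiOn (fun θ => Hfun r μ σ k θ θ₀) (Set.Icc 0 θ₀) := by
    intro θ₀ hθ₀ x hx y hy hxy
    simp only [hHeq]
    have := hGanti θ₀ hθ₀.1 hθ₀.2 hx hy hxy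
    linarith
  -- part 1
  have part1 : ∀ θ θ₀ : ℝ, 0 ≤ θ → θ ≤ θ₀ → θ₀ < k → 0 ≤ Hfun r μ σ k θ θ₀ := by
    intro θ θ₀ h0 h1 h2
    rw [hHeq]
    have hG : Gf a X k θ₀ ≤ Gf a X k θ := by
      rcases eq_or_lt_of_le h1 with rfl | h
      · exact le_rfl
      · exact (hGanti θ₀ (h0.trans h1) h2 ⟨h0, h1⟩ ⟨h0.trans h1, le_rfl⟩ h).le
    have hph : 0 ≤ phif a X k θ₀ := by
      unfold phif
      exact mul_nonneg (Real.exp_pos _).le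
        (Real.sinh_nonneg_iff.mpr (mul_nonneg hXpos.le (by linarith)))
    nlinarith [mul_nonneg hKpos.le hph]
  -- diagonal
  have diag : ∀ y, Hfun r μ σ k y y = K * phif a X k y := by
    intro y; rw [hHeq]; ring
  have hphicont : Continuous (fun y => K * phif a X k y) := by unfold phif; fun_prop
  have hdiaganti : StrictAntiOn (fun y => K * phif a X k y) (Ico 0 k) := by
    apply strictAntiOn_of_deriv_neg (convex_Ico 0 k) hphicont.continuousOn
    intro x hx
    rw [interior_Ico] at hx
    rw [((hasDerivAt_phif a X k x).const_mul K).deriv]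
    have h1 := hDpos (X*(k-x))
    have hpos := mul_pos hKpos (mul_pos (Real.exp_pos (a*x)) h1)
    have hre : K * (exp (a*x) * (a * sinh (X*(k-x)) - X * cosh (X*(k-x))))
        = -(K * (exp (a*x) * (X * cosh (X*(k-x)) - a * sinh (X*(k-x))))) := by ring
    rw [hre]; linarith
  have part3 : StrictAntiOn (fun θ₀ => Hfun r μ σ k θ₀ θ₀) (Set.Ico (0:ℝ) k) := by
    intro x hx y hy hxy
    simp only [diag]
    exact hdiaganti hx hy hxy
  refine ⟨part1, part2, part3, ?_, ?_⟩
  · rintro v ⟨θ, θ₀, h0, h1, h2, rfl⟩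
    exact part1 θ θ₀ h0 h1 h2
  · intro b hb
    by_contra hb0
    push_neg at hb0
    have htend : Filter.Tendsto (fun y => K * phif a X k y)
        (nhdsWithin k (Iio k)) (nhds 0) := by
      have h0 : K * phif a X k k = 0 := by unfold phif; simp
      rw [← h0]
      exact (hphicont.continuousAt.tendsto).mono_left nhdsWithin_le_nhds
    have hev : ∀ᶠ y in nhdsWithin k (Iio k), K * phif a X k y < b :=
      htend.eventually_lt_const hb0
    have hev2 : ∀ᶠ y in nhdsWithin k (Iio k), y ∈ Ioo 0 k :=
      Ioo_mem_nhdsLT_of_mem ⟨hk, le_rfl⟩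
    obtain ⟨y, hy1, hy2⟩ := (hev.and hev2).exists
    have hle : b ≤ Hfun r μ σ k y y := hb ⟨y, y, hy2.1.le, le_rfl, hy2.2, rfl⟩
    rw [diag] at hle
    linarith
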